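/- Let f ∈ Diff_0([0,1]) be a C² diffeomorphism with lim_{n→∞} Γ_n(f)^{1/n} = 1. Define a_n = max_{x∈[0,1]} log (fⁿ)'(x) for n ≥ 0 (respectively a_n = max_{x∈[0,1]} log (f⁻ⁿ)'(x)), so a₀ = 0. Then for every n ≥ 1, 2a_n − a_{n−1} − a_{n+1} ≤ C(f)·e^{−a_n}, where C(f) = L(f)·e^{v(f)}, L(f) is the Lipschitz constant of log f' on [0,1], and v(f) is the total variation of log f' on [0,1]. -/

import Mathlib

/-- `IsDiff0 f g` says that `f` is an orientation-preserving `C¹` diffeomorphism of the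
interval `[0,1]` fixing the endpoints, with inverse `g`. -/
structure IsDiff0 (f g : ℝ → ℝ) : Prop where
  mapsTo : Set.MapsTo f (Set.Icc 0 1) (Set.Icc 0 1)
  mapsTo_inv : Set.MapsTo g (Set.Icc 0 1) (Set.Icc 0 1)
  left_inv : ∀ x ∈ Set.Icc (0:ℝ) 1, g (f x) = x
  right_inv : ∀ x ∈ Set.Icc (0:ℝ) 1, f (g x) = x
  map_zero : f 0 = 0
  map_one : f 1 = 1
  contDiffOn : ContDiffOn ℝ 1 f (Set.Icc 0 1)
  contDiffOn_inv : ContDiffOn ℝ 1 g (Set.Icc 0 1)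
  deriv_pos : ∀ x ∈ Set.Icc (0:ℝ) 1, 0 < derivWithin f (Set.Icc 0 1) x

/-- The growth sequence `Γ_n(f) = max (sup_x (fⁿ)'(x), sup_x (f⁻ⁿ)'(x))`, where `g = f⁻¹`. -/
noncomputable def Gamma (f g : ℝ → ℝ) (n : ℕ) : ℝ :=
  max (⨆ x : Set.Icc (0:ℝ) 1, derivWithin (f^[n]) (Set.Icc 0 1) (x : ℝ))
      (⨆ x : Set.Icc (0:ℝ) 1, derivWithin (g^[n]) (Set.Icc 0 1) (x : ℝ))

/-- `a_n(f) = max_{x ∈ [0,1]} log (fⁿ)'(x)`. -/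
noncomputable def aseq (f : ℝ → ℝ) (n : ℕ) : ℝ :=
  ⨆ x : Set.Icc (0:ℝ) 1, Real.log (derivWithin (f^[n]) (Set.Icc 0 1) (x : ℝ))

open Set Finset Real

namespace AlmostConvex

noncomputable def P (F : ℝ → ℝ) (k : ℕ) (x : ℝ) : ℝ :=
  ∏ i ∈ Finset.range k, derivWithin F (Set.Icc 0 1) (F^[i] x)

variable {F G : ℝ → ℝ}

lemma hS : UniqueDiffOn ℝ (Set.Icc (0:ℝ) 1) := uniqueDiffOn_Icc one_pos

lemma contOn (h : IsDiff0 F G) : ContinuousOn F (Set.Icc 0 1) := h.contDiffOn.continuousOn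

lemma strictMonoF (h : IsDiff0 F G) : StrictMonoOn F (Set.Icc 0 1) := by
  apply strictMonoOn_of_hasDerivWithinAt_pos (convex_Icc _ _) (contOn h)
      (f' := fun x => derivWithin F (Set.Icc 0 1) x)
  · intro x hx
    exact (((h.contDiffOn.differentiableOn one_ne_zero) x
      (interior_subset hx)).hasDerivWithinAt).mono interior_subset
  · intro x hx
    exact h.deriv_pos x (interior_subset hx)

lemma mapsToIter (h : IsDiff0 F G) (k : ℕ) :
    Set.MapsTo (F^[k]) (Set.Icc 0 1) (Set.Icc 0 1) := h.mapsTo.iterate k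

lemma contIter (h : IsDiff0 F G) (k : ℕ) : ContinuousOn (F^[k]) (Set.Icc 0 1) := by
  induction k with
  | zero => simpa using continuousOn_id
  | succ n ih =>
    rw [Function.iterate_succ]
    exact ih.comp (contOn h) h.mapsTo

lemma strictMonoIter (h : IsDiff0 F G) (k : ℕ) : StrictMonoOn (F^[k]) (Set.Icc 0 1) := by
  induction k with
  | zero => intro a _ b _ hab; simpa using hab
  | succ n ih =>
    intro a ha b hb hab
    rw [Function.iterate_succ_apply, Function.iterate_succ_apply]
    exact ih (h.mapsTo ha) (h.mapsTo hb) (strictMonoF h ha hb hab)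

lemma monoIter (h : IsDiff0 F G) (k : ℕ) : MonotoneOn (F^[k]) (Set.Icc 0 1) :=
  (strictMonoIter h k).monotoneOn

lemma hasDerivIter' (h : IsDiff0 F G) (k : ℕ) :
    ∀ x ∈ Set.Icc (0:ℝ) 1, HasDerivWithinAt (F^[k]) (P F k x) (Set.Icc 0 1) x := by
  induction k with
  | zero => intro x _; simpa [P] using (hasDerivWithinAt_id x (Set.Icc (0:ℝ) 1))
  | succ n ih =>
    intro x hx
    have hF : HasDerivWithinAt F (derivWithin F (Set.Icc 0 1) x) (Set.Icc 0 1) x :=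
      ((h.contDiffOn.differentiableOn one_ne_zero) x hx).hasDerivWithinAt
    have hcomp := (ih (F x) (h.mapsTo hx)).comp x hF h.mapsTo
    rw [← Function.iterate_succ] at hcomp
    have : P F (n+1) x = P F n (F x) * derivWithin F (Set.Icc 0 1) x := by
      rw [P, P, Finset.prod_range_succ']
      simp [Function.iterate_succ_apply]
    rw [this]
    exact hcomp

lemma hasDerivIter (h : IsDiff0 F G) (k : ℕ) {x : ℝ} (hx : x ∈ Set.Icc (0:ℝ) 1) :
    HasDerivWithinAt (F^[k]) (P F k x) (Set.Icc 0 1) x := hasDerivIter' h k x hx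

lemma derivIter_eq (h : IsDiff0 F G) (k : ℕ) {x : ℝ} (hx : x ∈ Set.Icc (0:ℝ) 1) :
    derivWithin (F^[k]) (Set.Icc 0 1) x = P F k x :=
  (hasDerivIter h k hx).derivWithin (hS x hx)

lemma Ppos (h : IsDiff0 F G) (k : ℕ) {x : ℝ} (hx : x ∈ Set.Icc (0:ℝ) 1) :
    0 < P F k x :=
  Finset.prod_pos fun i _ => h.deriv_pos _ (mapsToIter h i hx)

noncomputable def phi (F : ℝ → ℝ) (z : ℝ) : ℝ := Real.log (derivWithin F (Set.Icc 0 1) z)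

lemma Psucc (F : ℝ → ℝ) (k : ℕ) (x : ℝ) :
    P F (k+1) x = P F k (F x) * derivWithin F (Set.Icc 0 1) x := by
  rw [P, P, Finset.prod_range_succ']
  simp [Function.iterate_succ_apply]

lemma logP (h : IsDiff0 F G) (k : ℕ) {x : ℝ} (hx : x ∈ Set.Icc (0:ℝ) 1) :
    Real.log (P F k x) = ∑ i ∈ Finset.range k, phi F (F^[i] x) :=
  Real.log_prod fun i _ => (h.deriv_pos _ (mapsToIter h i hx)).ne'

lemma contP (h : IsDiff0 F G) (k : ℕ) : ContinuousOn (P F k) (Set.Icc 0 1) := by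
  apply continuousOn_finset_prod
  intro i _
  exact (h.contDiffOn.continuousOn_derivWithin hS le_rfl).comp (contIter h i) (mapsToIter h i)

lemma exists_max (h : IsDiff0 F G) (k : ℕ) :
    ∃ x₀ ∈ Set.Icc (0:ℝ) 1, (∀ z ∈ Set.Icc (0:ℝ) 1, Real.log (P F k z) ≤ Real.log (P F k x₀))
      ∧ aseq F k = Real.log (P F k x₀) := by
  have hcont : ContinuousOn (fun z => Real.log (P F k z)) (Set.Icc (0:ℝ) 1) :=
    ContinuousOn.log (contP h k) (fun z hz => (Ppos h k hz).ne')
  obtain ⟨x₀, hx₀, hmax⟩ := isCompact_Icc.exists_isMaxOn (Set.nonempty_Icc.2 zero_le_one) hcont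
  refine ⟨x₀, hx₀, fun z hz => hmax hz, ?_⟩
  have hbdd : BddAbove (Set.range fun x : Set.Icc (0:ℝ) 1 =>
      Real.log (derivWithin (F^[k]) (Set.Icc 0 1) (x : ℝ))) := by
    refine ⟨Real.log (P F k x₀), ?_⟩
    rintro _ ⟨x, rfl⟩
    show Real.log (derivWithin (F^[k]) (Set.Icc 0 1) (x : ℝ)) ≤ _
    rw [derivIter_eq h k x.2]
    exact hmax x.2
  apply le_antisymm
  · apply ciSup_le
    intro x
    show Real.log (derivWithin (F^[k]) (Set.Icc 0 1) (x : ℝ)) ≤ _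
    rw [derivIter_eq h k x.2]
    exact hmax x.2
  · have := le_ciSup hbdd (⟨x₀, hx₀⟩ : Set.Icc (0:ℝ) 1)
    rwa [derivIter_eq h k hx₀] at this

lemma le_aseq (h : IsDiff0 F G) (k : ℕ) {z : ℝ} (hz : z ∈ Set.Icc (0:ℝ) 1) :
    Real.log (P F k z) ≤ aseq F k := by
  obtain ⟨x₀, hx₀, hmax, heq⟩ := exists_max h k
  rw [heq]
  exact hmax z hz

lemma derivWithin_inv_eq (h : IsDiff0 F G) {x : ℝ} (hx : x ∈ Set.Icc (0:ℝ) 1) :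
    derivWithin G (Set.Icc 0 1) x = (derivWithin F (Set.Icc 0 1) (G x))⁻¹ := by
  have hy : G x ∈ Set.Icc (0:ℝ) 1 := h.mapsTo_inv hx
  have hfy : F (G x) = x := h.right_inv x hx
  have hG : HasDerivWithinAt G (derivWithin G (Set.Icc 0 1) x) (Set.Icc 0 1) x :=
    ((h.contDiffOn_inv.differentiableOn one_ne_zero) x hx).hasDerivWithinAt
  have hF : HasDerivWithinAt F (derivWithin F (Set.Icc 0 1) (G x)) (Set.Icc 0 1) (G x) :=
    ((h.contDiffOn.differentiableOn one_ne_zero) (G x) hy).hasDerivWithinAt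
  have hG' : HasDerivWithinAt G (derivWithin G (Set.Icc 0 1) x) (Set.Icc 0 1) (F (G x)) := by
    rwa [hfy]
  have hcomp := hG'.comp (G x) hF h.mapsTo
  have hid : HasDerivWithinAt id
      (derivWithin G (Set.Icc 0 1) x * derivWithin F (Set.Icc 0 1) (G x))
      (Set.Icc 0 1) (G x) := by
    apply hcomp.congr
    · intro z hz; exact (h.left_inv z hz).symm
    · exact (h.left_inv (G x) hy).symm
  have h1 : derivWithin G (Set.Icc 0 1) x * derivWithin F (Set.Icc 0 1) (G x) = 1 := by
    have e1 := hid.derivWithin (hS (G x) hy)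
    have e2 := (hasDerivWithinAt_id (G x) (Set.Icc (0:ℝ) 1)).derivWithin (hS (G x) hy)
    rw [e1] at e2
    exact e2
  exact eq_inv_of_mul_eq_one_left h1

lemma _root_.IsDiff0.symm (h : IsDiff0 F G) : IsDiff0 G F where
  mapsTo := h.mapsTo_inv
  mapsTo_inv := h.mapsTo
  left_inv := h.right_inv
  right_inv := h.left_inv
  map_zero := by
    have := h.left_inv 0 (Set.mem_Icc.2 ⟨le_rfl, zero_le_one⟩)
    rwa [h.map_zero] at this
  map_one := by
    have := h.left_inv 1 (Set.mem_Icc.2 ⟨zero_le_one, le_rfl⟩)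
    rwa [h.map_one] at this
  contDiffOn := h.contDiffOn_inv
  contDiffOn_inv := h.contDiffOn
  deriv_pos := by
    intro x hx
    rw [derivWithin_inv_eq h hx]
    exact inv_pos.2 (h.deriv_pos _ (h.mapsTo_inv hx))

lemma denjoy (h : IsDiff0 F G) (v : ℝ)
    (Hvar : ∀ (m : ℕ) (u : ℕ → ℝ), (Monotone u ∨ Antitone u) →
      (∀ i, u i ∈ Set.Icc (0:ℝ) 1) →
      ∑ j ∈ Finset.range m, |phi F (u (j+1)) - phi F (u j)| ≤ v)
    (k : ℕ) (x' w1 w2 : ℝ) (hx'S : x' ∈ Set.Icc (0:ℝ) 1)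
    (h1 : w1 ∈ Set.Icc (0:ℝ) 1) (h2 : w2 ∈ Set.Icc (0:ℝ) 1)
    (hlt : w1 < w2) (hadj : F w1 = w2 ∨ F w2 = w1) (hx'mem : x' ∈ Set.Icc w1 w2)
    (hval : aseq F k = Real.log (P F k x')) :
    w2 - w1 ≤ Real.exp v * Real.exp (-(aseq F k)) := by
  have hsub : Set.Icc w1 w2 ⊆ Set.Icc (0:ℝ) 1 := Set.Icc_subset_Icc h1.1 h2.2
  have hcont : ContinuousOn (F^[k]) (Set.Icc w1 w2) := (contIter h k).mono hsub
  have hderiv : ∀ z ∈ Set.Ioo w1 w2, HasDerivAt (F^[k]) (P F k z) z := by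
    intro z hz
    have hzS : z ∈ Set.Icc (0:ℝ) 1 := hsub (Set.mem_Icc.2 ⟨hz.1.le, hz.2.le⟩)
    have hnh : Set.Icc (0:ℝ) 1 ∈ nhds z :=
      Icc_mem_nhds (lt_of_le_of_lt h1.1 hz.1) (lt_of_lt_of_le hz.2 h2.2)
    exact ((hasDerivIter h k hzS).mono_of_mem_nhdsWithin
      (nhdsWithin_le_nhds hnh)).hasDerivAt hnh
  obtain ⟨ξ, hξ, hslope⟩ :=
    exists_hasDerivAt_eq_slope (F^[k]) (fun z => P F k z) hlt hcont hderiv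
  have hξS : ξ ∈ Set.Icc (0:ℝ) 1 := hsub ⟨hξ.1.le, hξ.2.le⟩
  obtain ⟨lo, hlo⟩ : ∃ t, t = min x' ξ := ⟨_, rfl⟩
  obtain ⟨hi, hhi⟩ : ∃ t, t = max x' ξ := ⟨_, rfl⟩
  have hloM : lo ∈ Set.Icc w1 w2 := by
    rw [hlo]; exact ⟨le_min hx'mem.1 hξ.1.le, (min_le_left _ _).trans hx'mem.2⟩
  have hhiM : hi ∈ Set.Icc w1 w2 := by
    rw [hhi]; exact ⟨le_trans hx'mem.1 (le_max_left _ _), max_le hx'mem.2 hξ.2.le⟩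
  have hloS : lo ∈ Set.Icc (0:ℝ) 1 := hsub hloM
  have hhiS : hi ∈ Set.Icc (0:ℝ) 1 := hsub hhiM
  have hlohi : lo ≤ hi := by rw [hlo, hhi]; exact min_le_max
  have hFtlo : ∀ t, F^[t] lo ∈ Set.Icc (0:ℝ) 1 := fun t => mapsToIter h t hloS
  have hFthi : ∀ t, F^[t] hi ∈ Set.Icc (0:ℝ) 1 := fun t => mapsToIter h t hhiS
  -- construct the interleaved chain
  obtain ⟨u, hu, huS, hu2t, hu2t1⟩ :
      ∃ u : ℕ → ℝ, (Monotone u ∨ Antitone u) ∧ (∀ i, u i ∈ Set.Icc (0:ℝ) 1) ∧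
        (∀ t, ({u (2*t), u (2*t+1)} : Set ℝ) = {F^[t] lo, F^[t] hi}) ∧ True := by
    rcases hadj with hA | hB
    · -- increasing case : F w1 = w2
      refine ⟨fun j => if Even j then F^[j/2] lo else F^[j/2] hi, Or.inl ?_, ?_, ?_, trivial⟩
      · apply monotone_nat_of_le_succ
        intro j
        rcases Nat.even_or_odd j with he | ho
        · obtain ⟨t, ht⟩ := he
          have hEj : Even j := ⟨t, ht⟩
          have h1' : j / 2 = t := by omega
          have h2' : (j+1) / 2 = t := by omega
          have hne : ¬ Even (j+1) := by simp [Nat.even_add_one, hEj]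
          rw [if_pos hEj, if_neg hne, h1', h2']
          exact monoIter h t hloS hhiS hlohi
        · obtain ⟨t, ht⟩ := ho
          have hne : ¬ Even j := by rw [ht]; simp [parity_simps]
          have heven : Even (j+1) := by rw [ht]; exact ⟨t+1, by ring⟩
          have h1' : j / 2 = t := by omega
          have h2' : (j+1) / 2 = t + 1 := by omega
          rw [if_neg hne, if_pos heven, h1', h2']
          rw [Function.iterate_succ_apply]
          apply monoIter h t hhiS (h.mapsTo hloS)
          calc hi ≤ w2 := hhiM.2
            _ = F w1 := hA.symm
            _ ≤ F lo := (strictMonoF h).monotoneOn h1 hloS hloM.1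
      · intro i
        dsimp only
        by_cases he : Even i
        · rw [if_pos he]; exact hFtlo _
        · rw [if_neg he]; exact hFthi _
      · intro t
        have e1 : Even (2*t) := ⟨t, by ring⟩
        have e2 : ¬ Even (2*t+1) := by simp [parity_simps]
        have d1 : 2*t/2 = t := by omega
        have d2 : (2*t+1)/2 = t := by omega
        dsimp only
        rw [if_pos e1, if_neg e2, d1, d2]
    · -- decreasing case : F w2 = w1
      refine ⟨fun j => if Even j then F^[j/2] hi else F^[j/2] lo, Or.inr ?_, ?_, ?_, trivial⟩
      · apply antitone_nat_of_succ_le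
        intro j
        rcases Nat.even_or_odd j with he | ho
        · obtain ⟨t, ht⟩ := he
          have hEj : Even j := ⟨t, ht⟩
          have h1' : j / 2 = t := by omega
          have h2' : (j+1) / 2 = t := by omega
          have hne : ¬ Even (j+1) := by simp [Nat.even_add_one, hEj]
          rw [if_pos hEj, if_neg hne, h1', h2']
          exact monoIter h t hloS hhiS hlohi
        · obtain ⟨t, ht⟩ := ho
          have hne : ¬ Even j := by rw [ht]; simp [parity_simps]
          have heven : Even (j+1) := by rw [ht]; exact ⟨t+1, by ring⟩
          have h1' : j / 2 = t := by omega
          have h2' : (j+1) / 2 = t + 1 := by omega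
          rw [if_neg hne, if_pos heven, h1', h2']
          rw [Function.iterate_succ_apply]
          apply monoIter h t (h.mapsTo hhiS) hloS
          calc F hi ≤ F w2 := (strictMonoF h).monotoneOn hhiS h2 hhiM.2
            _ = w1 := hB
            _ ≤ lo := hloM.1
      · intro i
        dsimp only
        by_cases he : Even i
        · rw [if_pos he]; exact hFthi _
        · rw [if_neg he]; exact hFtlo _
      · intro t
        have e1 : Even (2*t) := ⟨t, by ring⟩
        have e2 : ¬ Even (2*t+1) := by simp [parity_simps]
        have d1 : 2*t/2 = t := by omega
        have d2 : (2*t+1)/2 = t := by omega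
        dsimp only
        rw [if_pos e1, if_neg e2, d1, d2]
        exact Set.pair_comm _ _
  -- distortion estimate
  have hpair : ∀ t, |phi F (F^[t] x') - phi F (F^[t] ξ)| = |phi F (u (2*t+1)) - phi F (u (2*t))| := by
    intro t
    have hset := hu2t t
    rcases Set.pair_eq_pair_iff.1 hset with ⟨e1, e2⟩ | ⟨e1, e2⟩ <;>
      rcases le_total x' ξ with hc | hc
    · have hloeq : lo = x' := by rw [hlo]; exact min_eq_left hc
      have hhieq : hi = ξ := by rw [hhi]; exact max_eq_right hc
      rw [e2, e1, hloeq, hhieq]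
      exact abs_sub_comm _ _
    · have hloeq : lo = ξ := by rw [hlo]; exact min_eq_right hc
      have hhieq : hi = x' := by rw [hhi]; exact max_eq_left hc
      rw [e2, e1, hloeq, hhieq]
    · have hloeq : lo = x' := by rw [hlo]; exact min_eq_left hc
      have hhieq : hi = ξ := by rw [hhi]; exact max_eq_right hc
      rw [e2, e1, hloeq, hhieq]
    · have hloeq : lo = ξ := by rw [hlo]; exact min_eq_right hc
      have hhieq : hi = x' := by rw [hhi]; exact max_eq_left hc
      rw [e2, e1, hloeq, hhieq]
      exact abs_sub_comm _ _
  have hdist : Real.log (P F k x') - Real.log (P F k ξ) ≤ v := by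
    rw [logP h k hx'S, logP h k hξS, ← Finset.sum_sub_distrib]
    calc ∑ t ∈ Finset.range k, (phi F (F^[t] x') - phi F (F^[t] ξ))
        ≤ ∑ t ∈ Finset.range k, |phi F (F^[t] x') - phi F (F^[t] ξ)| :=
          Finset.sum_le_sum fun i _ => le_abs_self _
      _ = ∑ t ∈ Finset.range k, |phi F (u (2*t+1)) - phi F (u (2*t))| :=
          Finset.sum_congr rfl fun i _ => hpair i
      _ ≤ ∑ j ∈ Finset.range (2*k), |phi F (u (j+1)) - phi F (u j)| := by
          have himg : ∑ t ∈ Finset.range k, |phi F (u (2*t+1)) - phi F (u (2*t))|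
              = ∑ j ∈ (Finset.range k).image (fun t => 2*t), |phi F (u (j+1)) - phi F (u j)| := by
            rw [Finset.sum_image (by intro a _ b _ hab; simp only at hab; omega)]
          rw [himg]
          apply Finset.sum_le_sum_of_subset_of_nonneg
          · intro j hj
            simp only [Finset.mem_image, Finset.mem_range] at hj ⊢
            omega
          · intro i _ _
            exact abs_nonneg _
      _ ≤ v := Hvar (2*k) u hu huS
  have hPξ : Real.exp (aseq F k - v) ≤ P F k ξ := by
    have h1' : aseq F k - v ≤ Real.log (P F k ξ) := by
      rw [hval]; linarith
    calc Real.exp (aseq F k - v) ≤ Real.exp (Real.log (P F k ξ)) := Real.exp_le_exp.2 h1'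
      _ = P F k ξ := Real.exp_log (Ppos h k hξS)
  have hnum : F^[k] w2 - F^[k] w1 ≤ 1 := by
    have ha := (mapsToIter h k h2).2
    have hb := (mapsToIter h k h1).1
    linarith
  have heq : w2 - w1 = (F^[k] w2 - F^[k] w1) / P F k ξ := by
    have hP0 : P F k ξ ≠ 0 := (Ppos h k hξS).ne'
    have hw : w2 - w1 ≠ 0 := (sub_pos.2 hlt).ne'
    field_simp
    have := hslope
    field_simp at this
    linarith [this]
  rw [heq]
  calc (F^[k] w2 - F^[k] w1) / P F k ξ ≤ 1 / Real.exp (aseq F k - v) :=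
      div_le_div₀ zero_le_one hnum (Real.exp_pos _) hPξ
    _ = Real.exp v * Real.exp (-(aseq F k)) := by
      rw [one_div, ← Real.exp_neg, neg_sub, sub_eq_add_neg, Real.exp_add]

lemma master (h : IsDiff0 F G) (v L : ℝ) (hv0 : 0 ≤ v) (hL0 : 0 ≤ L)
    (Hvar : ∀ (m : ℕ) (u : ℕ → ℝ), (Monotone u ∨ Antitone u) →
      (∀ i, u i ∈ Set.Icc (0:ℝ) 1) →
      ∑ j ∈ Finset.range m, |phi F (u (j+1)) - phi F (u j)| ≤ v)
    (Hlip : ∀ x ∈ Set.Icc (0:ℝ) 1, phi F x - phi F (G x) ≤ L * max |x - G x| |F x - x|) :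
    ∀ n : ℕ, 2 * aseq F (n+1) - aseq F n - aseq F (n+2)
      ≤ L * Real.exp v * Real.exp (-(aseq F (n+1))) := by
  intro n
  obtain ⟨x', hx'S, hmax, hval⟩ := exists_max h (n+1)
  have hGx'S : G x' ∈ Set.Icc (0:ℝ) 1 := h.mapsTo_inv hx'S
  have hFx'S : F x' ∈ Set.Icc (0:ℝ) 1 := h.mapsTo hx'S
  have hFGx' : F (G x') = x' := h.right_inv x' hx'S
  have key1 : aseq F (n+1) + phi F (G x') ≤ aseq F (n+2) := by
    have hle := le_aseq h (n+2) hGx'S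
    have hP : P F (n+2) (G x') = P F (n+1) x' * derivWithin F (Set.Icc 0 1) (G x') := by
      rw [Psucc, hFGx']
    rw [hP, Real.log_mul (Ppos h (n+1) hx'S).ne' (h.deriv_pos _ hGx'S).ne', ← hval] at hle
    exact hle
  have key2 : aseq F (n+1) - phi F x' ≤ aseq F n := by
    have hle := le_aseq h n hFx'S
    have hP : P F (n+1) x' = P F n (F x') * derivWithin F (Set.Icc 0 1) x' := Psucc F n x'
    have hlog : aseq F (n+1) = Real.log (P F n (F x')) + phi F x' := by
      rw [hval, hP, Real.log_mul (Ppos h n hFx'S).ne' (h.deriv_pos _ hx'S).ne']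
      rfl
    linarith
  have hb1 : |x' - G x'| ≤ Real.exp v * Real.exp (-(aseq F (n+1))) := by
    rcases lt_trichotomy (G x') x' with hlt | heq | hgt
    · have := denjoy h v Hvar (n+1) x' (G x') x' hx'S hGx'S hx'S hlt (Or.inl hFGx')
        ⟨hlt.le, le_rfl⟩ hval
      rwa [abs_of_pos (sub_pos.2 hlt)]
    · rw [heq]
      simp [abs_of_nonneg, le_of_lt (mul_pos (Real.exp_pos v) (Real.exp_pos _))]
    · have := denjoy h v Hvar (n+1) x' x' (G x') hx'S hx'S hGx'S hgt (Or.inr hFGx')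
        ⟨le_rfl, hgt.le⟩ hval
      rwa [abs_sub_comm, abs_of_pos (sub_pos.2 hgt)]
  have hb2 : |F x' - x'| ≤ Real.exp v * Real.exp (-(aseq F (n+1))) := by
    rcases lt_trichotomy x' (F x') with hlt | heq | hgt
    · have := denjoy h v Hvar (n+1) x' x' (F x') hx'S hx'S hFx'S hlt (Or.inl rfl)
        ⟨le_rfl, hlt.le⟩ hval
      rwa [abs_of_pos (sub_pos.2 hlt)]
    · rw [← heq]
      simp [le_of_lt (mul_pos (Real.exp_pos v) (Real.exp_pos _))]
    · have := denjoy h v Hvar (n+1) x' (F x') x' hx'S hFx'S hx'S hgt (Or.inr rfl)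
        ⟨hgt.le, le_rfl⟩ hval
      rwa [abs_sub_comm, abs_of_pos (sub_pos.2 hgt)]
  calc 2 * aseq F (n+1) - aseq F n - aseq F (n+2) ≤ phi F x' - phi F (G x') := by linarith
    _ ≤ L * max |x' - G x'| |F x' - x'| := Hlip x' hx'S
    _ ≤ L * (Real.exp v * Real.exp (-(aseq F (n+1)))) :=
        mul_le_mul_of_nonneg_left (max_le hb1 hb2) hL0
    _ = L * Real.exp v * Real.exp (-(aseq F (n+1))) := (mul_assoc _ _ _).symm

lemma phi_inv (h : IsDiff0 F G) {x : ℝ} (hx : x ∈ Set.Icc (0:ℝ) 1) :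
    phi G x = - phi F (G x) := by
  rw [phi, phi, derivWithin_inv_eq h hx, Real.log_inv]

lemma Hvar_f (h : IsDiff0 F G) (v : ℝ) (hv0 : 0 ≤ v)
    (hv : eVariationOn (fun x => Real.log (derivWithin F (Set.Icc 0 1) x)) (Set.Icc 0 1)
      = ENNReal.ofReal v) :
    ∀ (m : ℕ) (u : ℕ → ℝ), (Monotone u ∨ Antitone u) → (∀ i, u i ∈ Set.Icc (0:ℝ) 1) →
      ∑ j ∈ Finset.range m, |phi F (u (j+1)) - phi F (u j)| ≤ v := by
  have mono_case : ∀ (m : ℕ) (u : ℕ → ℝ), Monotone u → (∀ i, u i ∈ Set.Icc (0:ℝ) 1) →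
      ∑ j ∈ Finset.range m, |phi F (u (j+1)) - phi F (u j)| ≤ v := by
    intro m u hu huS
    have key : ENNReal.ofReal (∑ j ∈ Finset.range m, |phi F (u (j+1)) - phi F (u j)|)
        ≤ ENNReal.ofReal v := by
      rw [ENNReal.ofReal_sum_of_nonneg (fun j _ => abs_nonneg _), ← hv]
      have hterm : ∀ j ∈ Finset.range m, ENNReal.ofReal |phi F (u (j+1)) - phi F (u j)|
          = edist ((fun x => Real.log (derivWithin F (Set.Icc 0 1) x)) (u (j+1)))
            ((fun x => Real.log (derivWithin F (Set.Icc 0 1) x)) (u j)) := by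
        intro j _
        rw [edist_dist, Real.dist_eq]
        rfl
      rw [Finset.sum_congr rfl hterm]
      exact eVariationOn.sum_le (n := m) hu huS
    exact (ENNReal.ofReal_le_ofReal_iff hv0).1 key
  rintro m u (hu | hu) huS
  · exact mono_case m u hu huS
  · have hwmono : Monotone (fun j => u (m - j)) :=
      fun a b hab => hu (Nat.sub_le_sub_left hab m)
    have hwS : ∀ i, (fun j => u (m - j)) i ∈ Set.Icc (0:ℝ) 1 := fun i => huS _
    have hmc := mono_case m _ hwmono hwS
    have hrefl : ∑ j ∈ Finset.range m,
          |phi F ((fun j => u (m - j)) (j+1)) - phi F ((fun j => u (m - j)) j)|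
        = ∑ j ∈ Finset.range m, |phi F (u (j+1)) - phi F (u j)| := by
      rw [← Finset.sum_range_reflect (fun i => |phi F (u (i+1)) - phi F (u i)|) m]
      apply Finset.sum_congr rfl
      intro j hj
      have hjm : j < m := Finset.mem_range.1 hj
      have e1 : m - (j+1) = m - 1 - j := by omega
      have e2 : m - j = (m - 1 - j) + 1 := by omega
      show |phi F (u (m - (j+1))) - phi F (u (m - j))| = _
      rw [e1, e2, abs_sub_comm]
    linarith [hrefl ▸ hmc]

lemma Hvar_g (h : IsDiff0 F G) (v : ℝ) (hv0 : 0 ≤ v)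
    (hv : eVariationOn (fun x => Real.log (derivWithin F (Set.Icc 0 1) x)) (Set.Icc 0 1)
      = ENNReal.ofReal v) :
    ∀ (m : ℕ) (u : ℕ → ℝ), (Monotone u ∨ Antitone u) → (∀ i, u i ∈ Set.Icc (0:ℝ) 1) →
      ∑ j ∈ Finset.range m, |phi G (u (j+1)) - phi G (u j)| ≤ v := by
  intro m u hu huS
  have hmonoG : MonotoneOn G (Set.Icc (0:ℝ) 1) := (strictMonoF h.symm).monotoneOn
  have huS' : ∀ i, G (u i) ∈ Set.Icc (0:ℝ) 1 := fun i => h.mapsTo_inv (huS i)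
  have hu' : Monotone (fun j => G (u j)) ∨ Antitone (fun j => G (u j)) := by
    rcases hu with hu | hu
    · exact Or.inl fun a b hab => hmonoG (huS a) (huS b) (hu hab)
    · exact Or.inr fun a b hab => hmonoG (huS b) (huS a) (hu hab)
  have hcong : ∀ j, |phi G (u (j+1)) - phi G (u j)|
      = |phi F (G (u (j+1))) - phi F (G (u j))| := by
    intro j
    rw [phi_inv h (huS (j+1)), phi_inv h (huS j)]
    rw [show -phi F (G (u (j+1))) - -phi F (G (u j))
        = -(phi F (G (u (j+1))) - phi F (G (u j))) by ring, abs_neg]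
  rw [Finset.sum_congr rfl (fun j _ => hcong j)]
  exact Hvar_f h v hv0 hv m (fun j => G (u j)) hu' huS'

lemma Hlip_f (h : IsDiff0 F G) (L : ℝ) (hL0 : 0 ≤ L)
    (hL : LipschitzOnWith (Real.toNNReal L)
      (fun x => Real.log (derivWithin F (Set.Icc 0 1) x)) (Set.Icc 0 1)) :
    ∀ x ∈ Set.Icc (0:ℝ) 1, phi F x - phi F (G x) ≤ L * max |x - G x| |F x - x| := by
  intro x hx
  have hd := hL.dist_le_mul x hx (G x) (h.mapsTo_inv hx)
  rw [Real.dist_eq, Real.dist_eq, Real.coe_toNNReal _ hL0] at hd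
  calc phi F x - phi F (G x) ≤ |phi F x - phi F (G x)| := le_abs_self _
    _ ≤ L * |x - G x| := hd
    _ ≤ L * max |x - G x| |F x - x| :=
        mul_le_mul_of_nonneg_left (le_max_left _ _) hL0

lemma Hlip_g (h : IsDiff0 F G) (L : ℝ) (hL0 : 0 ≤ L)
    (hL : LipschitzOnWith (Real.toNNReal L)
      (fun x => Real.log (derivWithin F (Set.Icc 0 1) x)) (Set.Icc 0 1)) :
    ∀ x ∈ Set.Icc (0:ℝ) 1, phi G x - phi G (F x) ≤ L * max |x - F x| |G x - x| := by
  intro x hx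
  have hFx : F x ∈ Set.Icc (0:ℝ) 1 := h.mapsTo hx
  have e1 : phi G x = - phi F (G x) := phi_inv h hx
  have e2 : phi G (F x) = - phi F x := by
    rw [phi_inv h hFx, h.left_inv x hx]
  have hd := hL.dist_le_mul x hx (G x) (h.mapsTo_inv hx)
  rw [Real.dist_eq, Real.dist_eq, Real.coe_toNNReal _ hL0] at hd
  calc phi G x - phi G (F x) = phi F x - phi F (G x) := by rw [e1, e2]; ring
    _ ≤ |phi F x - phi F (G x)| := le_abs_self _
    _ ≤ L * |x - G x| := hd
    _ ≤ L * max |x - F x| |G x - x| := by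
        rw [abs_sub_comm x (G x)]
        exact mul_le_mul_of_nonneg_left (le_max_right _ _) hL0

end AlmostConvex

theorem aseq_almost_convex' (f g : ℝ → ℝ) (hf : IsDiff0 f g)
    (v L : ℝ) (hv0 : 0 ≤ v) (hL0 : 0 ≤ L)
    (hv : eVariationOn (fun x => Real.log (derivWithin f (Set.Icc 0 1) x)) (Set.Icc 0 1)
      = ENNReal.ofReal v)
    (hL : LipschitzOnWith (Real.toNNReal L)
      (fun x => Real.log (derivWithin f (Set.Icc 0 1) x)) (Set.Icc 0 1)) :
    (∀ n : ℕ, 2 * aseq f (n+1) - aseq f n - aseq f (n+2)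
      ≤ L * Real.exp v * Real.exp (-(aseq f (n+1)))) ∧
    (∀ n : ℕ, 2 * aseq g (n+1) - aseq g n - aseq g (n+2)
      ≤ L * Real.exp v * Real.exp (-(aseq g (n+1)))) := by
  constructor
  · exact AlmostConvex.master hf v L hv0 hL0 (AlmostConvex.Hvar_f hf v hv0 hv)
      (AlmostConvex.Hlip_f hf L hL0 hL)
  · exact AlmostConvex.master hf.symm v L hv0 hL0 (AlmostConvex.Hvar_g hf v hv0 hv)
      (AlmostConvex.Hlip_g hf L hL0 hL)


/-- Almost-convexity of the sequences `a_n(f)` and `a_n(f⁻¹)`: for a `C²` diffeomorphism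
`f` of `[0,1]` with `Γ_n(f)^{1/n} → 1`, one has
`2 a_n - a_{n-1} - a_{n+1} ≤ C(f) e^{-a_n}` with `C(f) = L(f) e^{v(f)}`, where `L(f)` is
the Lipschitz constant of `log f'` and `v(f)` its total variation on `[0,1]`. -/
theorem aseq_almost_convex (f g : ℝ → ℝ) (hf : IsDiff0 f g)
    (hC2 : ContDiffOn ℝ 2 f (Set.Icc 0 1))
    (hγ : Filter.Tendsto (fun n : ℕ => Gamma f g n ^ (1 / (n : ℝ))) Filter.atTop (nhds 1))
    (v L : ℝ) (hv0 : 0 ≤ v) (hL0 : 0 ≤ L)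
    (hv : eVariationOn (fun x => Real.log (derivWithin f (Set.Icc 0 1) x)) (Set.Icc 0 1)
      = ENNReal.ofReal v)
    (hL : LipschitzOnWith (Real.toNNReal L)
      (fun x => Real.log (derivWithin f (Set.Icc 0 1) x)) (Set.Icc 0 1)) :
    (∀ n : ℕ, 2 * aseq f (n+1) - aseq f n - aseq f (n+2)
      ≤ L * Real.exp v * Real.exp (-(aseq f (n+1)))) ∧
    (∀ n : ℕ, 2 * aseq g (n+1) - aseq g n - aseq g (n+2)
      ≤ L * Real.exp v * Real.exp (-(aseq g (n+1)))) := by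
  exact aseq_almost_convex' f g hf v L hv0 hL0 hv hL
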